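/- Let G be a linear algebraic group over an algebraically closed field of characteristic p > 0, generated by a torus T and finitely many one-dimensional unipotent subgroups each normalized by an element t whose conjugation action preserves T and each of these subgroups. If conjugation by t acts on T with finite order prime to p and acts on each one-dimensional unipotent subgroup (≅ G_a) through a scalar of finite multiplicative order, then the automorphism Ad(t) of G is semisimple of finite order prime to p. -/

import Mathlib

lemma units_order_not_dvd_char (p : ℕ) (hp : p.Prime)
    (k : Type*) [Field k] [CharP k p]
    (u : kˣ) (hu : IsOfFinOrder u) : ¬ p ∣ orderOf u := by
  haveI : Fact p.Prime := ⟨hp⟩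
  rintro ⟨d, hd⟩
  have hpos : 0 < orderOf u := hu.orderOf_pos
  have hd0 : 0 < d := by
    rcases Nat.eq_zero_or_pos d with h | h
    · rw [h, Nat.mul_zero] at hd; omega
    · exact h
  have hv : (u ^ d) ^ p = 1 := by
    rw [← pow_mul, mul_comm, ← hd, pow_orderOf_eq_one]
  have hvk : ((u ^ d : kˣ) : k) ^ p = 1 := by
    rw [← Units.val_pow_eq_pow_val, hv, Units.val_one]
  have hsub : (((u ^ d : kˣ) : k) - 1) ^ p = 0 := by
    rw [sub_pow_char, hvk, one_pow, sub_self]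
  have hone : ((u ^ d : kˣ) : k) = 1 := by
    have h0 : ((u ^ d : kˣ) : k) - 1 = 0 := pow_eq_zero_iff hp.ne_zero |>.mp hsub
    exact sub_eq_zero.mp h0
  have hv1 : u ^ d = 1 := Units.ext (by simpa using hone)
  have hdvd : orderOf u ∣ d := orderOf_dvd_of_pow_eq_one hv1
  have : orderOf u ≤ d := Nat.le_of_dvd hd0 hdvd
  have : p * d ≤ d := hd ▸ this
  nlinarith [hp.two_le]

/-- Let `G` be a group (the points of a linear algebraic group over an
algebraically closed field `k` of characteristic `p > 0`) generated by a torus `T`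
together with finitely many one-dimensional unipotent subgroups `U i ≅ 𝔾ₐ`
(parametrized additively by `k`), and let `φ = Ad(t)` be an automorphism of `G`
preserving `T` and each `U i`.  If `φ` acts on `T` with finite order prime to `p`
and on each `U i` through a scalar `c i ∈ kˣ` of finite multiplicative order,
then `φ` is (semisimple of) finite order prime to `p`. -/
theorem ad_semisimple_of_generators
    (p : ℕ) (hp : p.Prime)
    (k : Type*) [Field k] [CharP k p]
    (G : Type*) [Group G] (φ : MulAut G)
    (T : Subgroup G)
    (ι : Type*) [Finite ι] (U : ι → k → G)
    (hUadd : ∀ i, ∀ x y : k, U i (x + y) = U i x * U i y)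
    (hgen : Subgroup.closure ((T : Set G) ∪ ⋃ i, Set.range (U i)) = ⊤)
    (hTstab : ∀ t ∈ T, φ t ∈ T)
    (hT : ∃ n : ℕ, 0 < n ∧ ¬ p ∣ n ∧ ∀ t ∈ T, (φ ^ n) t = t)
    (hU : ∀ i, ∃ c : kˣ, IsOfFinOrder c ∧ ∀ x : k, φ (U i x) = U i ((c : k) * x)) :
    IsOfFinOrder φ ∧ ¬ p ∣ orderOf φ := by
  classical
  have := Fintype.ofFinite ι
  obtain ⟨n, hn0, hnp, hnfix⟩ := hT
  set c : ι → kˣ := fun i => (hU i).choose with hc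
  have hcfin : ∀ i, IsOfFinOrder (c i) := fun i => (hU i).choose_spec.1
  have hcact : ∀ i, ∀ x : k, φ (U i x) = U i ((c i : k) * x) :=
    fun i => (hU i).choose_spec.2
  set N : ℕ := n * ∏ i, orderOf (c i) with hN
  have hNpos : 0 < N := by
    apply Nat.mul_pos hn0
    exact Finset.prod_pos fun i _ => (hcfin i).orderOf_pos
  have hNp : ¬ p ∣ N := by
    intro h
    rcases (Nat.Prime.dvd_mul hp).mp h with h | h
    · exact hnp h
    · obtain ⟨i, _, hi⟩ := Prime.exists_mem_finset_dvd hp.prime h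
      exact units_order_not_dvd_char p hp k (c i) (hcfin i) hi
  -- powers act on U i by powers of c i
  have hUpow : ∀ (m : ℕ) i (x : k), (φ ^ m) (U i x) = U i (((c i : k) ^ m) * x) := by
    intro m
    induction m with
    | zero => intro i x; simp
    | succ m ih =>
      intro i x
      rw [pow_succ, MulAut.mul_apply, hcact, ih, pow_succ]
      ring_nf
  -- φ ^ N = 1
  have hpowN : φ ^ N = 1 := by
    ext g
    have hg : g ∈ Subgroup.closure ((T : Set G) ∪ ⋃ i, Set.range (U i)) := by
      rw [hgen]; trivial
    simp only [MulAut.one_apply]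
    induction hg using Subgroup.closure_induction with
    | mem x hx =>
      rcases hx with hx | hx
      · -- x ∈ T
        have key : ∀ m : ℕ, ((φ ^ n) ^ m) x = x := by
          intro m
          induction m with
          | zero => simp
          | succ m ih => rw [pow_succ, MulAut.mul_apply, hnfix x hx, ih]
        have : (φ ^ N) x = ((φ ^ n) ^ (∏ i, orderOf (c i))) x := by
          rw [← pow_mul]
        rw [this, key]
      · simp only [Set.mem_iUnion, Set.mem_range] at hx
        obtain ⟨i, y, rfl⟩ := hx
        rw [hUpow]
        have : (c i : k) ^ N = 1 := by
          have h1 : orderOf (c i) ∣ N :=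
            Dvd.dvd.mul_left (Finset.dvd_prod_of_mem _ (Finset.mem_univ i)) n
          have h2 : (c i) ^ N = 1 := orderOf_dvd_iff_pow_eq_one.mp h1
          simpa using congrArg Units.val h2
        rw [this, one_mul]
    | one => simp
    | mul x y _ _ hx hy => simp [map_mul, hx, hy]
    | inv x _ hx => simp [map_inv, hx]
  have hfin : IsOfFinOrder φ := isOfFinOrder_iff_pow_eq_one.mpr ⟨N, hNpos, hpowN⟩
  refine ⟨hfin, fun hdvd => hNp ?_⟩
  exact hdvd.trans (orderOf_dvd_of_pow_eq_one hpowN)
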